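/- Assume d = 2, the sample clouds from (X_{E,1}, X_{E,2}) with standard exponential margins converge in probability (with scaling log n) onto a limit set G with gauge function g, and the coefficients τ_1(δ), τ_2(δ) are well defined for δ ∈ [0,1]. Then τ_1(δ) = [min_{γ ∈ [0,δ]} g(1, γ)]^{−1} and τ_2(δ) = [min_{γ ∈ [0,δ]} g(γ, 1)]^{−1}. -/

import Mathlib

open MeasureTheory Filter Topology ProbabilityTheory Pointwise

/-- The `n`-point sample cloud `{X 1 / r n, …, X n / r n}` of the scaled observations. -/
def sampleCloud2 {Ω : Type*} (X : ℕ → Ω → ℝ × ℝ) (r : ℕ → ℝ)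
    (n : ℕ) (ω : Ω) : Set (ℝ × ℝ) :=
  {y | ∃ i, 1 ≤ i ∧ i ≤ n ∧ y = (r n)⁻¹ • X i ω}

/-- Convergence in probability of random sets onto a deterministic set `G`, in the sense that
the Hausdorff distance to `G` tends to `0` in probability. -/
def ConvInProbOnto2 {Ω : Type*} [MeasurableSpace Ω] (μ : Measure Ω)
    (N : ℕ → Ω → Set (ℝ × ℝ)) (G : Set (ℝ × ℝ)) : Prop :=
  ∀ ε : ℝ, 0 < ε →
    Tendsto (fun n => μ {ω | ε < Metric.hausdorffDist (N n ω) G}) atTop (𝓝 0)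

/-- `f` is regularly varying at infinity with index `ρ`. -/
def RegVaryingAtTop (f : ℝ → ℝ) (ρ : ℝ) : Prop :=
  ∀ x : ℝ, 0 < x → Tendsto (fun t => f (t * x) / f t) atTop (𝓝 (x ^ ρ))

lemma cloud_finite {Ω : Type*} (X : ℕ → Ω → ℝ × ℝ) (r : ℕ → ℝ) (n : ℕ) (ω : Ω) :
    (sampleCloud2 X r n ω).Finite := by
  apply Set.Finite.subset ((Set.finite_Icc 1 n).image (fun i => (r n)⁻¹ • X i ω))
  rintro y ⟨i, hi1, hi2, rfl⟩
  exact ⟨i, ⟨hi1, hi2⟩, rfl⟩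

lemma indep_prod {Ω : Type*} [MeasurableSpace Ω] (μ : Measure Ω)
    (X : ℕ → Ω → ℝ × ℝ) (hXmeas : ∀ i, Measurable (X i))
    (hindep : iIndepFun X μ)
    (hident : ∀ i, Measure.map (X i) μ = Measure.map (X 0) μ)
    (T : Set (ℝ × ℝ)) (hT : MeasurableSet T) (n : ℕ) :
    μ (⋂ i ∈ Finset.Icc 1 n, X i ⁻¹' T) = (μ (X 0 ⁻¹' T)) ^ n := by
  rw [hindep.meas_biInter (S := Finset.Icc 1 n) (s := fun i => X i ⁻¹' T)
    (fun i _ => ⟨T, hT, rfl⟩)]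
  have h1 : ∀ i ∈ Finset.Icc 1 n, μ (X i ⁻¹' T) = μ (X 0 ⁻¹' T) := fun i _ => by
    rw [← Measure.map_apply (hXmeas i) hT, hident i, Measure.map_apply (hXmeas 0) hT]
  rw [Finset.prod_congr rfl h1, Finset.prod_const, Nat.card_Icc]
  simp

lemma prob_toReal_le_one {Ω : Type*} [MeasurableSpace Ω] (μ : Measure Ω)
    [IsProbabilityMeasure μ] (A : Set Ω) : (μ A).toReal ≤ 1 := by
  have h := ENNReal.toReal_mono ENNReal.one_ne_top (prob_le_one (μ := μ) (s := A))
  simpa using h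

lemma prob_compl_toReal {Ω : Type*} [MeasurableSpace Ω] (μ : Measure Ω)
    [IsProbabilityMeasure μ] {A : Set Ω} (hA : MeasurableSet A) :
    (μ Aᶜ).toReal = 1 - (μ A).toReal := by
  rw [prob_compl_eq_one_sub hA, ENNReal.toReal_sub_of_le prob_le_one ENNReal.one_ne_top]
  simp

lemma tendsto_prob_toReal_zero {Ω : Type*} [MeasurableSpace Ω] (μ : Measure Ω)
    [IsProbabilityMeasure μ] (A : ℕ → Set Ω) (B : ℕ → Set Ω)
    (hsub : ∀ᶠ n in atTop, A n ⊆ B n)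
    (hB : Tendsto (fun n => μ (B n)) atTop (𝓝 0)) :
    Tendsto (fun n => (μ (A n)).toReal) atTop (𝓝 0) := by
  have hBreal : Tendsto (fun n => (μ (B n)).toReal) atTop (𝓝 0) := by
    have h0 : Tendsto ENNReal.toReal (𝓝 0) (𝓝 (0 : ℝ)) := by
      simpa using (ENNReal.tendsto_toReal (a := 0) (by simp))
    exact h0.comp hB
  apply squeeze_zero' (by filter_upwards with n; exact ENNReal.toReal_nonneg) _ hBreal
  filter_upwards [hsub] with n hn
  exact ENNReal.toReal_mono (measure_ne_top μ _) (measure_mono hn)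

lemma lem_exp_le' {p : ℝ} (h0 : 0 ≤ p) (h2 : p ≤ 1/2) : Real.exp (-(2*p)) ≤ 1 - p := by
  have h1 : 1 + 2*p ≤ Real.exp (2*p) := by
    have := Real.add_one_le_exp (2*p); linarith
  have hpos : (0:ℝ) < 1 + 2*p := by linarith
  rw [Real.exp_neg]
  have h4 : (Real.exp (2*p))⁻¹ ≤ (1 + 2*p)⁻¹ := inv_anti₀ hpos h1
  refine h4.trans ?_
  rw [inv_le_iff_one_le_mul₀ hpos]
  nlinarith

lemma lem_nq {q : ℕ → ℝ} (h0 : ∀ n, 0 ≤ q n) (h1 : ∀ n, q n ≤ 1)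
    (h : Tendsto (fun n => (1 - q n)^n) atTop (𝓝 1)) :
    Tendsto (fun n : ℕ => (n:ℝ) * q n) atTop (𝓝 0) := by
  have hub : ∀ n : ℕ, (1 - q n)^n ≤ Real.exp (-((n:ℝ) * q n)) := by
    intro n
    have hle : 1 - q n ≤ Real.exp (-(q n)) := by
      have := Real.add_one_le_exp (-(q n)); linarith
    calc (1 - q n)^n ≤ (Real.exp (-(q n)))^n := by
          apply pow_le_pow_left₀ (by linarith [h1 n]) hle
      _ = Real.exp (-((n:ℝ) * q n)) := by
          rw [← Real.exp_nat_mul]; ring_nf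
  have hev : ∀ᶠ n in atTop, (1:ℝ)/2 ≤ (1 - q n)^n := by
    have : ∀ᶠ x in (𝓝 (1:ℝ)), (1:ℝ)/2 ≤ x := eventually_ge_nhds (by norm_num)
    exact h.eventually this
  have hlog : Tendsto (fun n : ℕ => -Real.log ((1 - q n)^n)) atTop (𝓝 0) := by
    have hcont : Tendsto (fun n : ℕ => Real.log ((1 - q n)^n)) atTop (𝓝 (Real.log 1)) :=
      ((Real.continuousAt_log one_ne_zero).tendsto).comp h
    rw [Real.log_one] at hcont
    simpa using hcont.neg
  apply squeeze_zero' (by filter_upwards with n; exact mul_nonneg (Nat.cast_nonneg n) (h0 n)) _ hlog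
  filter_upwards [hev] with n hn
  have hpow_pos : (0:ℝ) < (1 - q n)^n := by linarith
  have := Real.log_le_log hpow_pos (hub n)
  rw [Real.log_exp] at this
  linarith

lemma lem_freq {p : ℕ → ℝ} (h0 : ∀ n, 0 ≤ p n) (h1 : ∀ n, p n ≤ 1)
    (h : Tendsto (fun n => (1 - p n)^n) atTop (𝓝 0)) :
    ∀ᶠ n : ℕ in atTop, 1/(n:ℝ) ≤ p n := by
  by_contra hcon
  rw [Filter.not_eventually] at hcon
  have hev : ∀ᶠ n : ℕ in atTop, (1 - p n)^n < Real.exp (-2) ∧ 2 ≤ n := by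
    refine (h.eventually (eventually_lt_nhds (Real.exp_pos (-2)))).and ?_
    exact eventually_ge_atTop 2
  obtain ⟨n, hn1, hn2, hn3⟩ := (hcon.and_eventually hev).exists
  push_neg at hn1
  have hnpos : (0:ℝ) < (n:ℝ) := by
    have : (2:ℝ) ≤ (n:ℝ) := by exact_mod_cast hn3
    linarith
  have hple : p n ≤ 1/2 := by
    have h2n : (1:ℝ)/(n:ℝ) ≤ 1/2 := by
      apply div_le_div_of_nonneg_left (by norm_num) (by norm_num) ?_
      exact_mod_cast hn3
    linarith
  have key : Real.exp (-2) ≤ (1 - p n)^n := by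
    calc Real.exp (-2) ≤ Real.exp (-(2 * ((n:ℝ) * p n))) / 1 := by
          rw [div_one]
          apply Real.exp_le_exp.2
          have : (n:ℝ) * p n ≤ 1 := by
            have := hn1.le
            calc (n:ℝ) * p n ≤ (n:ℝ) * (1/(n:ℝ)) := by
                  apply mul_le_mul_of_nonneg_left this (le_of_lt hnpos)
              _ = 1 := by field_simp
          linarith
      _ = (Real.exp (-(2 * p n)))^n := by
          rw [div_one, ← Real.exp_nat_mul]; ring_nf
      _ ≤ (1 - p n)^n := by
          apply pow_le_pow_left₀ (Real.exp_pos _).le (lem_exp_le' (h0 n) hple)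
  linarith


lemma cloudUB {Ω : Type*} [MeasurableSpace Ω] (μ : Measure Ω) [IsProbabilityMeasure μ]
    (X : ℕ → Ω → ℝ × ℝ) (hXmeas : ∀ i, Measurable (X i))
    (hindep : iIndepFun X μ)
    (hident : ∀ i, Measure.map (X i) μ = Measure.map (X 0) μ)
    (G : Set (ℝ × ℝ)) (hGne : G.Nonempty) (hGbd : Bornology.IsBounded G)
    (hconv : ConvInProbOnto2 μ (sampleCloud2 X fun n => Real.log n) G)
    (S : Set (ℝ × ℝ)) (hSmeas : MeasurableSet S)
    (ε : ℝ) (hε : 0 < ε) (hsub : Metric.cthickening ε G ⊆ S)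
    (hnq : ∀ q : ℕ → ℝ, (∀ n, 0 ≤ q n) → (∀ n, q n ≤ 1) →
      Tendsto (fun n => (1 - q n)^n) atTop (𝓝 1) →
      Tendsto (fun n : ℕ => (n:ℝ) * q n) atTop (𝓝 0)) :
    ∀ᶠ n : ℕ in atTop, (μ {a | (Real.log n)⁻¹ • X 0 a ∉ S}).toReal ≤ 1/(n:ℝ) := by
  set T : ℕ → Set (ℝ × ℝ) := fun n => (fun w : ℝ×ℝ => (Real.log n)⁻¹ • w) ⁻¹' S with hT
  have hTmeas : ∀ n : ℕ, MeasurableSet (T n) := fun n =>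
    (measurable_const_smul ((Real.log n)⁻¹)) hSmeas
  set A : ℕ → Set Ω := fun n => ⋂ i ∈ Finset.Icc 1 n, X i ⁻¹' (T n) with hA
  set p : ℕ → ℝ := fun n => (μ (X 0 ⁻¹' (T n))).toReal with hp
  have hAtoReal : ∀ n, (μ (A n)).toReal = (p n)^n := by
    intro n
    rw [hA, indep_prod μ X hXmeas hindep hident (T n) (hTmeas n) n, ENNReal.toReal_pow]
  have hAmeas : ∀ n, MeasurableSet (A n) := by
    intro n
    exact MeasurableSet.biInter (Set.to_countable _)
      (fun i _ => (hXmeas i) (hTmeas n))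
  -- bad event inside hausdorff event
  have hbad : ∀ᶠ n : ℕ in atTop, (A n)ᶜ ⊆
      {ω | ε < Metric.hausdorffDist (sampleCloud2 X (fun m => Real.log m) n ω) G} := by
    filter_upwards [eventually_ge_atTop 1] with n hn1
    intro ω hω
    simp only [hA, Set.mem_compl_iff, Set.mem_iInter, Finset.mem_Icc, Set.mem_preimage] at hω
    push_neg at hω
    obtain ⟨i, ⟨hi1, hi2⟩, hiT⟩ := hω
    set y := (Real.log n)⁻¹ • X i ω with hy
    have hyS : y ∉ S := hiT
    have hyN : y ∈ sampleCloud2 X (fun m => Real.log m) n ω := ⟨i, hi1, hi2, rfl⟩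
    have hNne : (sampleCloud2 X (fun m => Real.log m) n ω).Nonempty := ⟨y, hyN⟩
    have hNbd : Bornology.IsBounded (sampleCloud2 X (fun m => Real.log m) n ω) :=
      (cloud_finite X _ n ω).isBounded
    have hfin :=
      Metric.hausdorffEdist_ne_top_of_nonempty_of_bounded hNne hGne hNbd hGbd
    have hinf : ε < Metric.infDist y G := by
      by_contra hle
      push_neg at hle
      apply hyS
      apply hsub
      rw [Metric.mem_cthickening_iff]
      exact (ENNReal.le_ofReal_iff_toReal_le (Metric.infEdist_ne_top hGne) hε.le).mpr hle
    have := Metric.infDist_le_hausdorffDist_of_mem hyN hfin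
    exact lt_of_lt_of_le hinf this
  have hP1 : Tendsto (fun n => (p n)^n) atTop (𝓝 1) := by
    have h0 : Tendsto (fun n => (μ ((A n)ᶜ)).toReal) atTop (𝓝 0) :=
      tendsto_prob_toReal_zero μ _ _ hbad (hconv ε hε)
    have heq : ∀ n, (μ ((A n)ᶜ)).toReal = 1 - (p n)^n := by
      intro n; rw [prob_compl_toReal μ (hAmeas n), hAtoReal n]
    rw [funext heq] at h0
    have := h0.const_sub (b := 1)
    simpa using this
  have hp0 : ∀ n, 0 ≤ p n := fun n => ENNReal.toReal_nonneg
  have hp1 : ∀ n, p n ≤ 1 := fun n => prob_toReal_le_one μ _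
  have hq : Tendsto (fun n : ℕ => (n:ℝ) * (1 - p n)) atTop (𝓝 0) := by
    apply hnq (fun n => 1 - p n) (fun n => by show (0:ℝ) ≤ 1 - p n; linarith [hp1 n]) (fun n => by show (1:ℝ) - p n ≤ 1; linarith [hp0 n])
    have : (fun n : ℕ => (1 - (1 - p n))^n) = fun n => (p n)^n := by
      funext n; ring_nf
    rw [this]; exact hP1
  have hsmall : ∀ᶠ n : ℕ in atTop, (n:ℝ) * (1 - p n) ≤ 1 :=
    hq.eventually (eventually_le_nhds one_pos)
  filter_upwards [hsmall, eventually_ge_atTop 1] with n hn hn1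
  have hnpos : (0:ℝ) < (n:ℝ) := by exact_mod_cast hn1
  have hset : {a | (Real.log n)⁻¹ • X 0 a ∉ S} = (X 0 ⁻¹' (T n))ᶜ := rfl
  rw [hset, prob_compl_toReal μ ((hXmeas 0) (hTmeas n))]
  rw [le_div_iff₀ hnpos]
  calc (1 - p n) * n = (n:ℝ) * (1 - p n) := by ring
    _ ≤ 1 := hn

lemma cloudLB {Ω : Type*} [MeasurableSpace Ω] (μ : Measure Ω) [IsProbabilityMeasure μ]
    (X : ℕ → Ω → ℝ × ℝ) (hXmeas : ∀ i, Measurable (X i))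
    (hindep : iIndepFun X μ)
    (hident : ∀ i, Measure.map (X i) μ = Measure.map (X 0) μ)
    (G : Set (ℝ × ℝ)) (hGne : G.Nonempty) (hGbd : Bornology.IsBounded G)
    (hconv : ConvInProbOnto2 μ (sampleCloud2 X fun n => Real.log n) G)
    (q0 : ℝ × ℝ) (hq0 : q0 ∈ G) (ε : ℝ) (hε : 0 < ε)
    (hfreq : ∀ p : ℕ → ℝ, (∀ n, 0 ≤ p n) → (∀ n, p n ≤ 1) →
      Tendsto (fun n => (1 - p n)^n) atTop (𝓝 0) →
      ∀ᶠ n : ℕ in atTop, 1/(n:ℝ) ≤ p n) :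
    ∀ᶠ n : ℕ in atTop,
      1/(n:ℝ) ≤ (μ {a | dist ((Real.log n)⁻¹ • X 0 a) q0 < ε}).toReal := by
  set T : ℕ → Set (ℝ × ℝ) := fun n => {w : ℝ×ℝ | ¬ (dist ((Real.log n)⁻¹ • w) q0 < ε)}
    with hT
  have hTmeas : ∀ n : ℕ, MeasurableSet (T n) := by
    intro n
    have : IsOpen {w : ℝ×ℝ | dist ((Real.log n)⁻¹ • w) q0 < ε} := by
      have hcont : Continuous (fun w : ℝ×ℝ => dist ((Real.log n)⁻¹ • w) q0) :=
        (continuous_const_smul _).dist continuous_const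
      exact isOpen_Iio.preimage hcont
    exact (this.measurableSet.compl)
  set A : ℕ → Set Ω := fun n => ⋂ i ∈ Finset.Icc 1 n, X i ⁻¹' (T n) with hA
  set p : ℕ → ℝ := fun n => (μ {a | dist ((Real.log n)⁻¹ • X 0 a) q0 < ε}).toReal with hp
  have hcomp : ∀ n : ℕ, (X 0 ⁻¹' (T n)) = {a | dist ((Real.log n)⁻¹ • X 0 a) q0 < ε}ᶜ := by
    intro n; rfl
  have hAtoReal : ∀ n, (μ (A n)).toReal = (1 - p n)^n := by
    intro n
    rw [hA, indep_prod μ X hXmeas hindep hident (T n) (hTmeas n) n, ENNReal.toReal_pow,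
      hcomp n, prob_compl_toReal μ]
    have : MeasurableSet (X 0 ⁻¹' (T n)) := (hXmeas 0) (hTmeas n)
    rw [hcomp n] at this
    exact (MeasurableSet.compl_iff).mp this
  -- miss event inside hausdorff event
  have hbad : ∀ᶠ n : ℕ in atTop, A n ⊆
      {ω | ε/2 < Metric.hausdorffDist (sampleCloud2 X (fun m => Real.log m) n ω) G} := by
    filter_upwards [eventually_ge_atTop 1] with n hn1
    intro ω hω
    simp only [hA, Set.mem_iInter, Finset.mem_Icc, Set.mem_preimage, hT, Set.mem_setOf_eq]
      at hω
    by_contra hcon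
    simp only [Set.mem_setOf_eq, not_lt] at hcon
    have hNne : (sampleCloud2 X (fun m => Real.log m) n ω).Nonempty :=
      ⟨(Real.log n)⁻¹ • X 1 ω, 1, le_refl 1, hn1, rfl⟩
    have hNbd : Bornology.IsBounded (sampleCloud2 X (fun m => Real.log m) n ω) :=
      (cloud_finite X _ n ω).isBounded
    have hfin := Metric.hausdorffEdist_ne_top_of_nonempty_of_bounded hNne hGne hNbd hGbd
    have hfin' : EMetric.hausdorffEdist G (sampleCloud2 X (fun m => Real.log m) n ω) ≠ ⊤ := by
      rwa [EMetric.hausdorffEdist_comm] at hfin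
    have h1 : Metric.infDist q0 (sampleCloud2 X (fun m => Real.log m) n ω) ≤ ε/2 := by
      have := Metric.infDist_le_hausdorffDist_of_mem hq0 hfin'
      rw [Metric.hausdorffDist_comm] at this
      exact this.trans hcon
    have h2 : Metric.infDist q0 (sampleCloud2 X (fun m => Real.log m) n ω) < ε := by
      linarith
    obtain ⟨y, hyN, hyd⟩ := (Metric.infDist_lt_iff hNne).mp h2
    obtain ⟨i, hi1, hi2, rfl⟩ := hyN
    exact hω i ⟨hi1, hi2⟩ (by rw [dist_comm] at hyd; exact hyd)
  have hP0 : Tendsto (fun n => (1 - p n)^n) atTop (𝓝 0) := by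
    have h0 : Tendsto (fun n => (μ (A n)).toReal) atTop (𝓝 0) :=
      tendsto_prob_toReal_zero μ _ _ hbad (hconv (ε/2) (by linarith))
    rw [funext hAtoReal] at h0
    exact h0
  have hp0 : ∀ n, 0 ≤ p n := fun n => ENNReal.toReal_nonneg
  have hp1 : ∀ n, p n ≤ 1 := fun n => prob_toReal_le_one μ _
  exact hfreq p hp0 hp1 hP0

set_option maxHeartbeats 1000000 in
lemma rv_log {f : ℝ → ℝ} {L : ℝ}
    (hratio : Tendsto (fun t => f (t * Real.exp 1) / f t) atTop (𝓝 (Real.exp L)))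
    (K : ℕ) (hpos : ∀ k : ℕ, K ≤ k → 0 < f (Real.exp k)) :
    Tendsto (fun k : ℕ => Real.log (f (Real.exp k)) / k) atTop (𝓝 L) := by
  set B : ℕ → ℝ := fun k => Real.log (f (Real.exp k)) with hB
  have hexp : Tendsto (fun k : ℕ => Real.exp k) atTop atTop :=
    Real.tendsto_exp_atTop.comp tendsto_natCast_atTop_atTop
  have hr : Tendsto (fun k : ℕ => f (Real.exp ((k:ℕ)+1)) / f (Real.exp k)) atTop
      (𝓝 (Real.exp L)) := by
    have h1 := hratio.comp hexp
    have heq : (fun k : ℕ => f (Real.exp ((k:ℕ)+1)) / f (Real.exp k)) =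
        ((fun t => f (t * Real.exp 1) / f t) ∘ (fun k : ℕ => Real.exp k)) := by
      funext k
      simp only [Function.comp_apply]
      rw [← Real.exp_add]
    rw [heq]
    exact h1
  have hu : Tendsto (fun j : ℕ => B ((j+1) + K) - B (j + K)) atTop (𝓝 L) := by
    have hshift := hr.comp (tendsto_add_atTop_nat K)
    have hlog :=
      ((Real.continuousAt_log (Real.exp_pos L).ne').tendsto).comp hshift
    rw [Real.log_exp] at hlog
    apply hlog.congr
    intro j
    simp only [Function.comp_apply]
    have hc : ((j+K : ℕ) : ℝ) + 1 = (((j+K+1 : ℕ)) : ℝ) := by push_cast; ring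
    rw [hc]
    rw [Real.log_div (hpos _ (by omega)).ne' (hpos _ (by omega)).ne']
    have he : (j+K)+1 = (j+1)+K := by omega
    rw [he]
  have hces := hu.cesaro
  have hsum : ∀ m : ℕ, ∑ i ∈ Finset.range m, (B ((i+1) + K) - B (i + K)) = B (m+K) - B K := by
    intro m
    have := Finset.sum_range_sub (f := fun j => B (j + K)) m
    simpa using this
  rw [funext (fun (m : ℕ) => congrArg (fun z => (m:ℝ)⁻¹ * z) (hsum m))] at hces
  have t2 : Tendsto (fun m : ℕ => (m:ℝ)⁻¹ * B K) atTop (𝓝 0) := by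
    have := (tendsto_inv_atTop_zero.comp (tendsto_natCast_atTop_atTop (R := ℝ))).mul_const (B K)
    simpa using this
  have hBm : Tendsto (fun m : ℕ => (m:ℝ)⁻¹ * B (m+K)) atTop (𝓝 L) := by
    have := hces.add t2
    simp only [add_zero] at this
    apply this.congr
    intro m
    ring
  have t3 : Tendsto (fun m : ℕ => (m:ℝ)/((m:ℝ)+(K:ℝ))) atTop (𝓝 1) :=
    tendsto_natCast_div_add_atTop (K:ℝ)
  have hT : Tendsto (fun m : ℕ => B (m+K)/((m:ℝ)+(K:ℝ))) atTop (𝓝 L) := by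
    have hmul := hBm.mul t3
    rw [mul_one] at hmul
    apply hmul.congr'
    filter_upwards [eventually_ge_atTop 1] with m hm
    have hm0 : (m:ℝ) ≠ 0 := by
      have : (1:ℝ) ≤ (m:ℝ) := by exact_mod_cast hm
      linarith
    field_simp
  rw [← tendsto_add_atTop_iff_nat (f := fun k : ℕ => Real.log (f (Real.exp k)) / k) K]
  apply hT.congr
  intro m
  have hc : ((m:ℝ) + (K:ℝ)) = (((m+K : ℕ)) : ℝ) := by push_cast; ring
  rw [hc]

set_option maxHeartbeats 1000000 in
lemma tau_first {Ω : Type*} [MeasurableSpace Ω] (μ : Measure Ω) [IsProbabilityMeasure μ]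
    (X : ℕ → Ω → ℝ × ℝ) (hXmeas : ∀ i, Measurable (X i))
    (hindep : iIndepFun X μ)
    (hident : ∀ i, Measure.map (X i) μ = Measure.map (X 0) μ)
    (hpos2 : μ {ω | 0 < (X 0 ω).2} = 1)
    (g : ℝ × ℝ → ℝ) (hgcont : Continuous g)
    (hghomog : ∀ t : ℝ, 0 < t → ∀ p : ℝ × ℝ, g (t • p) = t * g p)
    (hgmax : ∀ p : ℝ × ℝ, 0 ≤ p.1 → 0 ≤ p.2 → max p.1 p.2 ≤ g p)
    (G : Set (ℝ × ℝ)) (hG : G = {p : ℝ × ℝ | 0 ≤ p.1 ∧ 0 ≤ p.2 ∧ g p ≤ 1})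
    (hconv : ConvInProbOnto2 μ (sampleCloud2 X fun n => Real.log n) G)
    (δ : ℝ) (hδ0 : 0 ≤ δ) (hδ1 : δ ≤ 1)
    (τ : ℝ) (hτ0 : 0 < τ)
    (hτ : ∀ x y : ℝ, 0 < x → 0 < y → RegVaryingAtTop
      (fun t => (μ {a | x * t < Real.exp ((X 0 a).1) ∧
        Real.exp ((X 0 a).2) ≤ y * t ^ δ}).toReal) (-1 / τ)) :
    τ = (sInf ((fun γ => g (1, γ)) '' Set.Icc 0 δ))⁻¹ := by
  -- basic facts about g and G
  have hg0 : g 0 = 0 := by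
    have h := hghomog 2 two_pos 0
    rw [smul_zero] at h
    linarith
  have hGnn : ∀ z ∈ G, 0 ≤ z.1 ∧ 0 ≤ z.2 ∧ g z ≤ 1 := by
    intro z hz; rw [hG] at hz; exact hz
  have hGnorm : ∀ z ∈ G, ‖z‖ ≤ 1 := by
    intro z hz
    obtain ⟨h1, h2, h3⟩ := hGnn z hz
    have hm : max z.1 z.2 ≤ 1 := le_trans (hgmax z h1 h2) h3
    rw [Prod.norm_def]
    apply max_le
    · rw [Real.norm_eq_abs, abs_of_nonneg h1]
      exact le_trans (le_max_left _ _) hm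
    · rw [Real.norm_eq_abs, abs_of_nonneg h2]
      exact le_trans (le_max_right _ _) hm
  have hGne : G.Nonempty := by
    refine ⟨0, ?_⟩
    rw [hG]
    refine ⟨le_refl 0, le_refl 0, ?_⟩
    rw [hg0]; norm_num
  have hGbd : Bornology.IsBounded G := by
    apply (Metric.isBounded_closedBall (x := (0 : ℝ×ℝ)) (r := 1)).subset
    intro z hz
    rw [Metric.mem_closedBall, dist_zero_right]
    exact hGnorm z hz
  have hGclosed : IsClosed G := by
    rw [hG]
    have : {p : ℝ × ℝ | 0 ≤ p.1 ∧ 0 ≤ p.2 ∧ g p ≤ 1} =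
        (Prod.fst ⁻¹' Set.Ici 0) ∩ ((Prod.snd ⁻¹' Set.Ici 0) ∩ (g ⁻¹' Set.Iic 1)) := by
      ext p; simp [Set.mem_setOf_eq, and_assoc]
    rw [this]
    exact (isClosed_Ici.preimage continuous_fst).inter
      ((isClosed_Ici.preimage continuous_snd).inter (isClosed_Iic.preimage hgcont))
  have hGcomp : IsCompact G := Metric.isCompact_of_isClosed_isBounded hGclosed hGbd
  -- the constant c
  set c := sInf ((fun γ => g (1, γ)) '' Set.Icc 0 δ) with hc
  have hIm : IsCompact ((fun γ => g (1, γ)) '' Set.Icc 0 δ) :=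
    isCompact_Icc.image (hgcont.comp (Continuous.prodMk_right 1))
  have hImne : ((fun γ => g (1, γ)) '' Set.Icc 0 δ).Nonempty :=
    (Set.nonempty_Icc.mpr hδ0).image _
  have hcmem : c ∈ (fun γ => g (1, γ)) '' Set.Icc 0 δ := hIm.sInf_mem hImne
  obtain ⟨γs, hγs, hγsc⟩ := hcmem
  have hγs0 : 0 ≤ γs := hγs.1
  have hγsδ : γs ≤ δ := hγs.2
  have hc1 : 1 ≤ c := by
    rw [← hγsc]
    exact le_trans (le_max_left _ _) (hgmax (1, γs) zero_le_one hγs0)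
  have hcpos : 0 < c := by linarith
  have hcle : ∀ γ, 0 ≤ γ → γ ≤ δ → c ≤ g (1, γ) := by
    intro γ h1 h2
    apply csInf_le
    · refine ⟨1, ?_⟩
      rintro y ⟨γ', hγ', rfl⟩
      exact le_trans (le_max_left _ _) (hgmax (1, γ') zero_le_one hγ'.1)
    · exact ⟨γ, ⟨h1, h2⟩, rfl⟩
  -- the complement of positivity is null
  have hmeas_pos2 : MeasurableSet {ω | 0 < (X 0 ω).2} := by
    have : {ω | 0 < (X 0 ω).2} = (fun ω => (X 0 ω).2) ⁻¹' Set.Ioi 0 := rfl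
    rw [this]
    exact (measurable_snd.comp (hXmeas 0)) measurableSet_Ioi
  have hnull : μ {a | ¬ (0 < (X 0 a).2)} = 0 := by
    have : {a | ¬ (0 < (X 0 a).2)} = {ω | 0 < (X 0 ω).2}ᶜ := rfl
    rw [this, prob_compl_eq_zero_iff hmeas_pos2]
    exact hpos2
  rcases eq_or_lt_of_le hδ0 with hδz | hδpos
  · -- δ = 0 : the hypotheses are contradictory
    exfalso
    have h2 := hτ 1 (1/2) one_pos (by norm_num)
    have hzero : ∀ t : ℝ, (μ {a | 1 * t < Real.exp ((X 0 a).1) ∧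
        Real.exp ((X 0 a).2) ≤ 1/2 * t ^ δ}).toReal = 0 := by
      intro t
      have hsub : {a | 1 * t < Real.exp ((X 0 a).1) ∧
          Real.exp ((X 0 a).2) ≤ 1/2 * t ^ δ} ⊆ {a | ¬ (0 < (X 0 a).2)} := by
        intro a ⟨_, ha2⟩
        rw [← hδz, Real.rpow_zero, mul_one] at ha2
        intro hpos
        have := Real.exp_lt_exp.mpr hpos
        rw [Real.exp_zero] at this
        linarith
      have hmm := measure_mono (μ := μ) hsub
      rw [hnull, le_zero_iff] at hmm
      rw [hmm]
      simp
    have hconst := h2 1 one_pos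
    have heq : (fun t : ℝ => (μ {a | 1 * (t * 1) < Real.exp ((X 0 a).1) ∧
        Real.exp ((X 0 a).2) ≤ 1/2 * (t * 1) ^ δ}).toReal /
        (μ {a | 1 * t < Real.exp ((X 0 a).1) ∧
        Real.exp ((X 0 a).2) ≤ 1/2 * t ^ δ}).toReal) = fun _ => (0:ℝ) := by
      funext t
      rw [hzero t, div_zero]
    rw [heq] at hconst
    have huniq := tendsto_nhds_unique hconst tendsto_const_nhds
    rw [Real.one_rpow] at huniq
    norm_num at huniq
  · -- δ > 0 : main case
    set F : ℝ → ℝ := fun t => (μ {a | t < Real.exp ((X 0 a).1) ∧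
        Real.exp ((X 0 a).2) ≤ t ^ δ}).toReal with hF
    have hFrv : ∀ x : ℝ, 0 < x →
        Tendsto (fun t => F (t * x) / F t) atTop (𝓝 (x ^ (-1/τ))) := by
      intro x hx
      have := hτ 1 1 one_pos one_pos x hx
      simpa only [one_mul] using this
    have hUB : ∀ κ : ℝ, 0 < κ → κ ≤ 1 → ∀ᶠ k : ℕ in atTop,
        F (Real.exp k) ≤ 2 * Real.exp (-((k:ℝ) * (c / (1+κ)))) := by
      intro κ hκ hκ1
      have hUopen : IsOpen {p : ℝ×ℝ | g p < 1 + κ} := isOpen_lt hgcont continuous_const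
      have hGU : G ⊆ {p : ℝ×ℝ | g p < 1 + κ} := by
        intro p hp; exact lt_of_le_of_lt (hGnn p hp).2.2 (by linarith)
      obtain ⟨η0, hη0, hη0sub⟩ := hGcomp.exists_thickening_subset_open hUopen hGU
      set η := min η0 1 with hηdef
      have hηpos : 0 < η := lt_min hη0 one_pos
      have hη1 : η ≤ 1 := min_le_right _ _
      have hηsub : Metric.thickening η G ⊆ {p : ℝ×ℝ | g p < 1 + κ} :=
        subset_trans (Metric.thickening_mono (min_le_left _ _) G) hη0sub
      have hS : MeasurableSet (Metric.thickening (η/2) G) :=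
        Metric.isOpen_thickening.measurableSet
      have hsubS : Metric.cthickening (η/4) G ⊆ Metric.thickening (η/2) G :=
        Metric.cthickening_subset_thickening' (by linarith) (by linarith) G
      obtain ⟨N₁, hN₁⟩ := eventually_atTop.mp
        (cloudUB μ X hXmeas hindep hident G hGne hGbd hconv _ hS (η/4) (by positivity) hsubS
          (fun q h0 h1 ht => lem_nq h0 h1 ht))
      have hcκpos : 0 < c/(1+κ) := by positivity
      have hsTop : Tendsto (fun k : ℕ => (k:ℝ) * (c/(1+κ))) atTop atTop :=
        Tendsto.atTop_mul_const hcκpos tendsto_natCast_atTop_atTop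
      have hexpTop : Tendsto (fun k : ℕ => Real.exp ((k:ℝ) * (c/(1+κ)))) atTop atTop :=
        Real.tendsto_exp_atTop.comp hsTop
      filter_upwards [hsTop.eventually_ge_atTop (max 1 (12/η)),
        hexpTop.eventually_ge_atTop (max ((N₁:ℝ)+2) 4),
        eventually_ge_atTop 1] with k hsk hek hk1
      set s := (k:ℝ) * (c/(1+κ)) with hsdef
      have hs1 : 1 ≤ s := le_trans (le_max_left _ _) hsk
      have hsη : 12/η ≤ s := le_trans (le_max_right _ _) hsk
      have hspos : 0 < s := by linarith
      have heN : (N₁:ℝ)+2 ≤ Real.exp s := le_trans (le_max_left _ _) hek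
      have he4 : (4:ℝ) ≤ Real.exp s := le_trans (le_max_right _ _) hek
      set n := ⌊Real.exp s⌋₊ with hndef
      have hnlb : Real.exp s - 1 < (n:ℝ) := Nat.sub_one_lt_floor _
      have hnub : (n:ℝ) ≤ Real.exp s := Nat.floor_le (Real.exp_pos s).le
      have hn3 : (3:ℝ) ≤ (n:ℝ) := by linarith
      have hnN₁ : N₁ ≤ n := by
        have hlt : (N₁:ℝ) < (n:ℝ) := by linarith
        exact_mod_cast hlt.le
      have hnpos : (0:ℝ) < (n:ℝ) := by linarith
      have hlogn_pos : 0 < Real.log n := Real.log_pos (by linarith)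
      have hlogn_le : Real.log n ≤ s := by
        calc Real.log n ≤ Real.log (Real.exp s) := Real.log_le_log hnpos hnub
          _ = s := Real.log_exp s
      have hlogn_ge : s - 1 ≤ Real.log n := by
        have hexpe : (2:ℝ) ≤ Real.exp 1 := by
          have := Real.add_one_le_exp 1; linarith
        have hes : Real.exp (s-1) ≤ (n:ℝ) := by
          rw [Real.exp_sub]
          have h1 : Real.exp s / Real.exp 1 ≤ Real.exp s / 2 :=
            div_le_div_of_nonneg_left (Real.exp_pos s).le two_pos hexpe
          have h2 : Real.exp s / 2 ≤ Real.exp s - 1 := by linarith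
          linarith
        calc s - 1 = Real.log (Real.exp (s-1)) := (Real.log_exp _).symm
          _ ≤ Real.log n := Real.log_le_log (Real.exp_pos _) hes
      -- the crucial set inclusion
      have hincl : {a | Real.exp (k:ℝ) < Real.exp ((X 0 a).1) ∧
          Real.exp ((X 0 a).2) ≤ (Real.exp (k:ℝ)) ^ δ} ⊆
          {a | (Real.log n)⁻¹ • X 0 a ∉ Metric.thickening (η/2) G} ∪
          {a | ¬ (0 < (X 0 a).2)} := by
        intro a ha
        obtain ⟨ha1, ha2⟩ := ha
        by_cases hb : 0 < (X 0 a).2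
        swap
        · right; exact hb
        left
        intro hmem
        set w := X 0 a with hwdef
        have hw1 : (k:ℝ) < w.1 := Real.exp_lt_exp.mp ha1
        have hw2 : w.2 ≤ (k:ℝ) * δ := by
          rw [← Real.exp_mul] at ha2
          exact Real.exp_le_exp.mp ha2
        obtain ⟨z, hzG, hzd⟩ := Metric.mem_thickening_iff.mp hmem
        set v' := (Real.log n)⁻¹ • w with hv'def
        have hv'norm : ‖v'‖ ≤ 2 := by
          have h1 : ‖v' - z‖ ≤ η/2 := by
            rw [← dist_eq_norm]; exact hzd.le
          have h2 : ‖z‖ ≤ 1 := hGnorm z hzG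
          calc ‖v'‖ = ‖v' - z + z‖ := by rw [sub_add_cancel]
            _ ≤ ‖v' - z‖ + ‖z‖ := norm_add_le _ _
            _ ≤ 2 := by linarith
        set v := s⁻¹ • w with hvdef
        have hsc : (Real.log n / s) * (Real.log n)⁻¹ = s⁻¹ := by
          field_simp [hlogn_pos.ne', hspos.ne']
        have hvv' : v = (Real.log n / s) • v' := by
          rw [hvdef, hv'def, smul_smul, hsc]
        have hdistvv' : dist v v' ≤ 2/s := by
          have hsub2 : (Real.log n / s) • v' - v' = (Real.log n / s - 1) • v' := by
            rw [sub_smul, one_smul]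
          rw [hvv', dist_eq_norm, hsub2, norm_smul]
          have hβnp : Real.log n / s - 1 ≤ 0 := by
            rw [sub_nonpos, div_le_one hspos]; exact hlogn_le
          have hβ : |Real.log n / s - 1| ≤ 1/s := by
            rw [abs_of_nonpos hβnp]
            have heqq : -(Real.log n/s - 1) = (s - Real.log n)/s := by field_simp; ring
            rw [heqq, div_le_div_iff₀ hspos hspos]
            nlinarith
          calc |Real.log n/s - 1| * ‖v'‖ ≤ (1/s) * 2 := by
                apply mul_le_mul hβ hv'norm (norm_nonneg _) (by positivity)
            _ = 2/s := by ring
        have hvthick : v ∈ Metric.thickening η G := by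
          rw [Metric.mem_thickening_iff]
          refine ⟨z, hzG, ?_⟩
          have h2s : 2/s ≤ η/6 := by
            rw [div_le_div_iff₀ hspos (by norm_num : (0:ℝ) < 6)]
            rw [div_le_iff₀ hηpos] at hsη
            nlinarith
          calc dist v z ≤ dist v v' + dist v' z := dist_triangle _ _ _
            _ < η/6 + η/2 := by
                have := hdistvv'
                apply add_lt_add_of_le_of_lt (by linarith) hzd
            _ ≤ η := by linarith
        have hgv : g v < 1 + κ := hηsub hvthick
        have hgw_ub : g w < s * (1+κ) := by
          have hgoal : g (s • v) = s * g v := hghomog s hspos v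
          rw [hvdef, smul_inv_smul₀ hspos.ne'] at hgoal
          rw [hgoal]
          exact mul_lt_mul_of_pos_left hgv hspos
        have hw1pos : 0 < w.1 := by
          have : (1:ℝ) ≤ (k:ℝ) := by exact_mod_cast hk1
          linarith
        have hr0 : 0 ≤ w.2/w.1 := (div_pos hb hw1pos).le
        have hrδ : w.2/w.1 ≤ δ := by
          rw [div_le_iff₀ hw1pos]
          nlinarith
        have hgw_lb : (k:ℝ) * c < g w := by
          have hw2' : w.1 * (w.2/w.1) = w.2 := by field_simp
          have hsplit : w = w.1 • ((1:ℝ), w.2/w.1) := by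
            rw [Prod.smul_mk, smul_eq_mul, smul_eq_mul, mul_one, hw2']
          calc (k:ℝ) * c < w.1 * c := by
                apply mul_lt_mul_of_pos_right hw1 hcpos
            _ ≤ w.1 * g (1, w.2/w.1) := by
                apply mul_le_mul_of_nonneg_left (hcle _ hr0 hrδ) hw1pos.le
            _ = g w := by rw [← hghomog w.1 hw1pos ((1:ℝ), w.2/w.1), ← hsplit]
        have heqsc : s * (1+κ) = (k:ℝ) * c := by
          rw [hsdef]; field_simp
        linarith
      -- the measure chain
      have hmono : μ {a | Real.exp (k:ℝ) < Real.exp ((X 0 a).1) ∧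
          Real.exp ((X 0 a).2) ≤ (Real.exp (k:ℝ)) ^ δ} ≤
          μ {a | (Real.log n)⁻¹ • X 0 a ∉ Metric.thickening (η/2) G} := by
        calc μ {a | Real.exp (k:ℝ) < Real.exp ((X 0 a).1) ∧
            Real.exp ((X 0 a).2) ≤ (Real.exp (k:ℝ)) ^ δ}
            ≤ μ ({a | (Real.log n)⁻¹ • X 0 a ∉ Metric.thickening (η/2) G} ∪
              {a | ¬ (0 < (X 0 a).2)}) := measure_mono hincl
          _ ≤ μ {a | (Real.log n)⁻¹ • X 0 a ∉ Metric.thickening (η/2) G} +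
              μ {a | ¬ (0 < (X 0 a).2)} := measure_union_le _ _
          _ = μ {a | (Real.log n)⁻¹ • X 0 a ∉ Metric.thickening (η/2) G} := by
              rw [hnull, add_zero]
      have hF1 : F (Real.exp (k:ℝ)) ≤
          (μ {a | (Real.log n)⁻¹ • X 0 a ∉ Metric.thickening (η/2) G}).toReal :=
        ENNReal.toReal_mono (measure_ne_top μ _) hmono
      have hF2 : (μ {a | (Real.log n)⁻¹ • X 0 a ∉ Metric.thickening (η/2) G}).toReal
          ≤ 1/(n:ℝ) := hN₁ n hnN₁
      have hF3 : 1/(n:ℝ) ≤ 2 * Real.exp (-s) := by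
        have hkey : 1/(n:ℝ) ≤ 1/(Real.exp s / 2) := by
          apply one_div_le_one_div_of_le (by positivity) (by linarith)
        calc 1/(n:ℝ) ≤ 1/(Real.exp s / 2) := hkey
          _ = 2 * Real.exp (-s) := by
              rw [Real.exp_neg]
              field_simp
      calc F (Real.exp (k:ℝ)) ≤ 1/(n:ℝ) := le_trans hF1 hF2
        _ ≤ 2 * Real.exp (-s) := hF3
        _ = 2 * Real.exp (-((k:ℝ)*(c/(1+κ)))) := by rw [hsdef]
    have hLB : ∀ κ : ℝ, 0 < κ → ∀ᶠ k : ℕ in atTop,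
        Real.exp (-((k:ℝ) * (c + κ))) / 2 ≤ F (Real.exp k) := by
      intro κ hκ
      obtain ⟨ν, hνpos, hνball⟩ : ∃ ν > 0, ∀ p : ℝ×ℝ, dist p (((1:ℝ), γs) : ℝ×ℝ) < ν →
          dist (g p) (g (((1:ℝ), γs) : ℝ×ℝ)) < κ := by
        have hca : ContinuousAt g (((1:ℝ), γs) : ℝ×ℝ) := hgcont.continuousAt
        rw [Metric.continuousAt_iff] at hca
        obtain ⟨ν, hν, h⟩ := hca κ hκ
        exact ⟨ν, hν, fun p hp => h hp⟩
      set σ := min (ν/2) (δ/2) with hσdef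
      have hσpos : 0 < σ := lt_min (by linarith) (by linarith)
      have hσν : σ ≤ ν/2 := min_le_left _ _
      have hσδ : σ ≤ δ/2 := min_le_right _ _
      set b₀ := min γs (δ - σ) with hb₀def
      have hb₀0 : 0 ≤ b₀ := le_min hγs0 (by linarith)
      have hb₀δ : b₀ ≤ δ - σ := min_le_right _ _
      have hb₀γlb : γs - σ ≤ b₀ := le_min (by linarith) (by linarith)
      have hb₀γub : b₀ ≤ γs := min_le_left _ _
      set lam := g (((1+σ : ℝ), b₀) : ℝ×ℝ) with hlamdef
      have hgc : g (((1:ℝ), γs) : ℝ×ℝ) = c := hγsc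
      have hdistp : dist (((1+σ : ℝ), b₀) : ℝ×ℝ) (((1:ℝ), γs) : ℝ×ℝ) < ν := by
        rw [Prod.dist_eq]
        show max (dist (1+σ) 1) (dist b₀ γs) < ν
        apply max_lt
        · have h1 : (1+σ) - 1 = σ := by ring
          rw [Real.dist_eq, h1, abs_of_pos hσpos]
          linarith
        · rw [Real.dist_eq]
          have h2 : |b₀ - γs| ≤ σ := abs_le.mpr ⟨by linarith, by linarith⟩
          linarith
      have hlamub : lam < c + κ := by
        have hb := hνball _ hdistp
        rw [Real.dist_eq, hgc] at hb
        have := abs_lt.mp hb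
        linarith [this.2]
      have hlam1 : 1 + σ ≤ lam :=
        le_trans (le_max_left _ _) (hgmax (((1+σ : ℝ), b₀) : ℝ×ℝ)
          (by show (0:ℝ) ≤ 1 + σ; linarith) hb₀0)
      have hlampos : 0 < lam := by linarith
      set q0 := lam⁻¹ • (((1+σ : ℝ), b₀) : ℝ×ℝ) with hq0def
      have hq0G : q0 ∈ G := by
        rw [hG]
        refine ⟨?_, ?_, ?_⟩
        · show 0 ≤ lam⁻¹ * (1+σ)
          positivity
        · show 0 ≤ lam⁻¹ * b₀
          positivity
        · show g q0 ≤ 1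
          rw [hq0def, hghomog lam⁻¹ (by positivity), ← hlamdef,
            inv_mul_cancel₀ hlampos.ne']
      have hq0norm : ‖q0‖ ≤ 1 := hGnorm q0 hq0G
      set ε1 := σ/(16*lam) with hε1def
      have hε1pos : 0 < ε1 := by positivity
      have hε1le : ε1 ≤ 1 := by
        rw [hε1def, div_le_one (by positivity)]
        linarith only [hσδ, hδ1, hlam1, hσpos]
      obtain ⟨N₂, hN₂⟩ := eventually_atTop.mp
        (cloudLB μ X hXmeas hindep hident G hGne hGbd hconv q0 hq0G ε1 hε1pos
          (fun p h0 h1 ht => lem_freq h0 h1 ht))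
      have hlamTop : Tendsto (fun k : ℕ => (k:ℝ) * lam) atTop atTop :=
        Tendsto.atTop_mul_const hlampos tendsto_natCast_atTop_atTop
      have hexpTop2 : Tendsto (fun k : ℕ => Real.exp ((k:ℝ) * lam)) atTop atTop :=
        Real.tendsto_exp_atTop.comp hlamTop
      filter_upwards [hlamTop.eventually_ge_atTop (max 1 (4/ε1)),
        hexpTop2.eventually_ge_atTop ((N₂:ℝ)+1), eventually_ge_atTop 1] with k hlk hek hk1
      set u := (k:ℝ) * lam with hudef
      have hu1 : 1 ≤ u := le_trans (le_max_left _ _) hlk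
      have huε : 4/ε1 ≤ u := le_trans (le_max_right _ _) hlk
      have hupos : 0 < u := by linarith
      have hkpos : (0:ℝ) < (k:ℝ) := by exact_mod_cast hk1
      set n := ⌈Real.exp u⌉₊ with hndef
      have hnlb : Real.exp u ≤ (n:ℝ) := Nat.le_ceil _
      have hnub : (n:ℝ) < Real.exp u + 1 := Nat.ceil_lt_add_one (Real.exp_pos u).le
      have hnpos : (0:ℝ) < (n:ℝ) := lt_of_lt_of_le (Real.exp_pos u) hnlb
      have hnN₂ : N₂ ≤ n := by
        have h5 : (N₂:ℝ) < (n:ℝ) := by linarith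
        exact_mod_cast h5.le
      have hlogn_ge : u ≤ Real.log n := by
        calc u = Real.log (Real.exp u) := (Real.log_exp u).symm
          _ ≤ Real.log n := Real.log_le_log (Real.exp_pos u) hnlb
      have hlogn_pos : 0 < Real.log n := lt_of_lt_of_le hupos hlogn_ge
      have hlogn_le : Real.log n ≤ u + 1 := by
        have hone : (1:ℝ) ≤ Real.exp u := Real.one_le_exp (by linarith)
        have h1 : (n:ℝ) ≤ Real.exp (u+1) := by
          rw [Real.exp_add]
          have hexpe : (2:ℝ) ≤ Real.exp 1 := by
            have h0 := Real.add_one_le_exp 1; linarith only [h0]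
          have hprod : Real.exp u * 2 ≤ Real.exp u * Real.exp 1 :=
            mul_le_mul_of_nonneg_left hexpe (Real.exp_pos u).le
          linarith only [hnub, hone, hprod]
        calc Real.log n ≤ Real.log (Real.exp (u+1)) := Real.log_le_log hnpos h1
          _ = u + 1 := Real.log_exp _
      -- the crucial inclusion
      have hincl : {a | dist ((Real.log n)⁻¹ • X 0 a) q0 < ε1} ⊆
          {a | Real.exp (k:ℝ) < Real.exp ((X 0 a).1) ∧
            Real.exp ((X 0 a).2) ≤ (Real.exp (k:ℝ)) ^ δ} := by
        intro a hd
        simp only [Set.mem_setOf_eq] at hd ⊢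
        set w := X 0 a with hwdef
        set v' := (Real.log n)⁻¹ • w with hv'def
        have hdle : dist v' q0 < ε1 := hd
        have hv'norm : ‖v'‖ ≤ 2 := by
          have h1 : ‖v' - q0‖ < ε1 := by rw [← dist_eq_norm]; exact hdle
          calc ‖v'‖ = ‖v' - q0 + q0‖ := by rw [sub_add_cancel]
            _ ≤ ‖v' - q0‖ + ‖q0‖ := norm_add_le _ _
            _ ≤ 2 := by linarith
        set v := u⁻¹ • w with hvdef
        have hsc : (Real.log n / u) * (Real.log n)⁻¹ = u⁻¹ := by
          field_simp [hlogn_pos.ne', hupos.ne']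
        have hvv' : v = (Real.log n / u) • v' := by
          rw [hvdef, hv'def, smul_smul, hsc]
        have hβ1 : 1 ≤ Real.log n / u := by
          rw [le_div_iff₀ hupos]; linarith
        have hβub : Real.log n / u - 1 ≤ 1/u := by
          have heq2 : Real.log n / u - 1 = (Real.log n - u)/u := by field_simp
          rw [heq2, div_le_div_iff₀ hupos hupos]
          have h7 : Real.log n - u ≤ 1 := by linarith only [hlogn_le]
          have := mul_le_mul_of_nonneg_right h7 hupos.le
          linarith only [this]
        have hdistvv' : dist v v' ≤ 2/u := by
          have hsub2 : (Real.log n / u) • v' - v' = (Real.log n / u - 1) • v' := by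
            rw [sub_smul, one_smul]
          rw [hvv', dist_eq_norm, hsub2, norm_smul]
          have habs : |Real.log n / u - 1| ≤ 1/u := by
            rw [abs_of_nonneg (by linarith)]
            exact hβub
          calc |Real.log n / u - 1| * ‖v'‖ ≤ (1/u) * 2 :=
              mul_le_mul habs hv'norm (norm_nonneg _) (by positivity)
            _ = 2/u := by ring
        have hdistvq : dist v q0 < 2*ε1 := by
          have h2u : 2/u ≤ ε1/2 := by
            rw [div_le_div_iff₀ hupos (by norm_num : (0:ℝ) < 2)]
            rw [div_le_iff₀ hε1pos] at huε
            have hcm : u * ε1 = ε1 * u := mul_comm _ _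
            linarith only [huε, hcm]
          calc dist v q0 ≤ dist v v' + dist v' q0 := dist_triangle _ _ _
            _ < ε1/2 + ε1 := add_lt_add_of_le_of_lt (le_trans hdistvv' h2u) hdle
            _ ≤ 2*ε1 := by linarith
        have hscl : lam * u⁻¹ = (k:ℝ)⁻¹ := by
          rw [hudef, mul_inv, mul_comm ((k:ℝ)⁻¹) lam⁻¹, ← mul_assoc,
            mul_inv_cancel₀ hlampos.ne', one_mul]
        have hlamv : lam • v = (k:ℝ)⁻¹ • w := by
          rw [hvdef, smul_smul, hscl]
        have hlamq0 : lam • q0 = (((1+σ:ℝ), b₀) : ℝ×ℝ) := by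
          rw [hq0def, smul_inv_smul₀ hlampos.ne']
        have hdball : dist ((k:ℝ)⁻¹ • w) (((1+σ:ℝ), b₀) : ℝ×ℝ) < σ/2 := by
          rw [← hlamv, ← hlamq0, dist_smul₀, Real.norm_eq_abs, abs_of_pos hlampos]
          have heq3 : lam * (2*ε1) = σ/8 := by
            rw [hε1def]
            field_simp
            ring
          calc lam * dist v q0 < lam * (2*ε1) := by
                exact mul_lt_mul_of_pos_left hdistvq hlampos
            _ = σ/8 := heq3
            _ ≤ σ/2 := by linarith
        rw [Prod.dist_eq] at hdball
        have hd1 := lt_of_le_of_lt (le_max_left _ _) hdball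
        have hd2 := lt_of_le_of_lt (le_max_right _ _) hdball
        simp only [Prod.smul_fst, Prod.smul_snd, smul_eq_mul] at hd1 hd2
        rw [Real.dist_eq] at hd1 hd2
        have habs1 := abs_lt.mp hd1
        have habs2 := abs_lt.mp hd2
        have hgt1 : 1 + σ/2 < (k:ℝ)⁻¹ * w.1 := by linarith [habs1.1]
        have hw1 : (k:ℝ) < w.1 := by
          have h3 : (k:ℝ) * (1 + σ/2) < (k:ℝ) * ((k:ℝ)⁻¹ * w.1) :=
            mul_lt_mul_of_pos_left hgt1 hkpos
          rw [← mul_assoc, mul_inv_cancel₀ hkpos.ne', one_mul] at h3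
          have h8 : 0 < (k:ℝ) * (σ/2) := by positivity
          have h9 : (k:ℝ) * (1 + σ/2) = (k:ℝ) + (k:ℝ)*(σ/2) := by ring
          linarith only [h3, h8, h9]
        have hlt2 : (k:ℝ)⁻¹ * w.2 < δ := by
          have h4 : (k:ℝ)⁻¹ * w.2 < b₀ + σ/2 := by linarith [habs2.2]
          linarith
        have hw2 : w.2 ≤ (k:ℝ) * δ := by
          have h3 : (k:ℝ) * ((k:ℝ)⁻¹ * w.2) ≤ (k:ℝ) * δ :=
            mul_le_mul_of_nonneg_left hlt2.le hkpos.le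
          rw [← mul_assoc, mul_inv_cancel₀ hkpos.ne', one_mul] at h3
          exact h3
        constructor
        · exact Real.exp_lt_exp.mpr hw1
        · rw [← Real.exp_mul]
          exact Real.exp_le_exp.mpr hw2
      -- measure chain
      have hmono : μ {a | dist ((Real.log n)⁻¹ • X 0 a) q0 < ε1} ≤
          μ {a | Real.exp (k:ℝ) < Real.exp ((X 0 a).1) ∧
            Real.exp ((X 0 a).2) ≤ (Real.exp (k:ℝ)) ^ δ} := measure_mono hincl
      have hF1 : (μ {a | dist ((Real.log n)⁻¹ • X 0 a) q0 < ε1}).toReal ≤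
          F (Real.exp (k:ℝ)) :=
        ENNReal.toReal_mono (measure_ne_top μ _) hmono
      have hF2 : 1/(n:ℝ) ≤ (μ {a | dist ((Real.log n)⁻¹ • X 0 a) q0 < ε1}).toReal :=
        hN₂ n hnN₂
      have hF3 : Real.exp (-((k:ℝ)*(c+κ))) / 2 ≤ 1/(n:ℝ) := by
        have hone : (1:ℝ) ≤ Real.exp u := Real.one_le_exp (by linarith)
        have h1 : (n:ℝ) ≤ 2 * Real.exp u := by linarith
        have h2 : Real.exp (-((k:ℝ)*(c+κ))) ≤ Real.exp (-u) := by
          apply Real.exp_le_exp.mpr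
          rw [hudef]
          have h6 : (k:ℝ) * lam ≤ (k:ℝ) * (c+κ) :=
            mul_le_mul_of_nonneg_left hlamub.le hkpos.le
          linarith
        calc Real.exp (-((k:ℝ)*(c+κ))) / 2 ≤ Real.exp (-u)/2 := by linarith
          _ ≤ 1/(n:ℝ) := by
              rw [Real.exp_neg, div_le_div_iff₀ two_pos hnpos]
              calc (Real.exp u)⁻¹ * (n:ℝ) ≤ (Real.exp u)⁻¹ * (2 * Real.exp u) := by
                    apply mul_le_mul_of_nonneg_left h1 (by positivity)
                _ = 2 := by field_simp
                _ ≤ 1 * 2 := by norm_num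
      linarith [hF1, hF2, hF3]
    -- positivity
    have hposF : ∀ᶠ k : ℕ in atTop, 0 < F (Real.exp k) := by
      filter_upwards [hLB 1 one_pos] with k hk
      have : (0:ℝ) < Real.exp (-((k:ℝ) * (c + 1))) / 2 := by positivity
      linarith
    obtain ⟨K, hK⟩ := eventually_atTop.mp hposF
    have hratio : Tendsto (fun t => F (t * Real.exp 1) / F t) atTop
        (𝓝 (Real.exp (-1/τ))) := by
      have := hFrv (Real.exp 1) (Real.exp_pos 1)
      rwa [Real.exp_one_rpow] at this
    have hlim := rv_log hratio K hK
    -- upper limit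
    have hle1 : ∀ κ : ℝ, 0 < κ → κ ≤ 1 → -1/τ ≤ -(c/(1+κ)) := by
      intro κ hκ hκ1
      have hub := hUB κ hκ hκ1
      have hrhs : Tendsto (fun k : ℕ => Real.log 2 / (k:ℝ) - c/(1+κ)) atTop
          (𝓝 (0 - c/(1+κ))) := by
        exact (tendsto_const_div_atTop_nhds_zero_nat (Real.log 2)).sub_const _
      rw [zero_sub] at hrhs
      apply le_of_tendsto_of_tendsto hlim hrhs
      filter_upwards [hub, hposF, eventually_ge_atTop (max K 1)] with k hk hkpos hk1
      have hk1' : 1 ≤ k := le_trans (le_max_right _ _) hk1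
      have hkpos' : (0:ℝ) < (k:ℝ) := by exact_mod_cast hk1'
      have hlog : Real.log (F (Real.exp k)) ≤ Real.log 2 - (k:ℝ) * (c/(1+κ)) := by
        have := Real.log_le_log hkpos hk
        rwa [Real.log_mul (by norm_num) (Real.exp_ne_zero _), Real.log_exp] at this
      rw [div_le_iff₀ hkpos']
      calc Real.log (F (Real.exp k)) ≤ Real.log 2 - (k:ℝ) * (c/(1+κ)) := hlog
        _ = (Real.log 2 / (k:ℝ) - c/(1+κ)) * (k:ℝ) := by field_simp
    -- lower limit
    have hle2 : ∀ κ : ℝ, 0 < κ → -(c+κ) ≤ -1/τ := by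
      intro κ hκ
      have hlb := hLB κ hκ
      have hrhs : Tendsto (fun k : ℕ => -(Real.log 2) / (k:ℝ) - (c+κ)) atTop
          (𝓝 (0 - (c+κ))) := by
        exact (tendsto_const_div_atTop_nhds_zero_nat (-(Real.log 2))).sub_const _
      rw [zero_sub] at hrhs
      apply le_of_tendsto_of_tendsto hrhs hlim
      filter_upwards [hlb, hposF, eventually_ge_atTop (max K 1)] with k hk hkpos hk1
      have hk1' : 1 ≤ k := le_trans (le_max_right _ _) hk1
      have hkpos' : (0:ℝ) < (k:ℝ) := by exact_mod_cast hk1'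
      have hlog : -(Real.log 2) - (k:ℝ) * (c+κ) ≤ Real.log (F (Real.exp k)) := by
        have h2 : (0:ℝ) < Real.exp (-((k:ℝ) * (c + κ))) / 2 := by positivity
        have := Real.log_le_log h2 hk
        rw [Real.log_div (Real.exp_ne_zero _) (by norm_num), Real.log_exp] at this
        linarith
      have hmul : (-Real.log 2 / (k:ℝ) - (c+κ)) * (k:ℝ) ≤ Real.log (F (Real.exp k)) := by
        calc (-Real.log 2 / (k:ℝ) - (c+κ)) * (k:ℝ)
            = -(Real.log 2) - (k:ℝ)*(c+κ) := by field_simp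
          _ ≤ _ := hlog
      calc -Real.log 2 / (k:ℝ) - (c+κ)
          = ((-Real.log 2 / (k:ℝ) - (c+κ)) * (k:ℝ))/(k:ℝ) := by field_simp
        _ ≤ Real.log (F (Real.exp k)) / (k:ℝ) := by
            exact (div_le_div_iff_of_pos_right hkpos').mpr hmul
    -- combine
    have hneg : -1/τ = -(1/τ) := by ring
    rw [hneg] at hle1 hle2
    have h2 : 1/τ ≤ c := by
      have : -c ≤ -(1/τ) := by
        apply le_of_forall_pos_le_add
        intro ε hε
        have := hle2 ε hε
        linarith
      linarith
    have h1 : c ≤ 1/τ := by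
      by_contra hcon
      push_neg at hcon
      have hκ0 : 0 < c * τ - 1 := by
        rw [div_lt_iff₀ hτ0] at hcon
        linarith
      set κ := min ((c*τ-1)/2) 1 with hκdef
      have hκpos : 0 < κ := lt_min (by linarith) one_pos
      have hκ1 : κ ≤ 1 := min_le_right _ _
      have hlt : 1 + κ < c * τ := by
        have : κ ≤ (c*τ-1)/2 := min_le_left _ _
        linarith
      have hcontr := hle1 κ hκpos hκ1
      have hgt : 1/τ < c/(1+κ) := by
        rw [div_lt_div_iff₀ hτ0 (by linarith : (0:ℝ) < 1+κ)]
        linarith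
      linarith
    have hfin : 1/τ = c := le_antisymm h2 h1
    rw [← hfin]
    field_simp

/-- Proposition 10 of the paper: in dimension `d = 2`, if the sample clouds
(scaled by `log n`) converge in probability onto the limit set `G` with gauge function `g` and
the coefficients `τ₁(δ), τ₂(δ)` are well defined, then
`τ₁(δ) = [min_{γ ∈ [0,δ]} g(1,γ)]⁻¹` and `τ₂(δ) = [min_{γ ∈ [0,δ]} g(γ,1)]⁻¹`. -/
theorem tau_two_dimensional_via_gauge
    {Ω : Type*} [MeasurableSpace Ω] (μ : Measure Ω) [IsProbabilityMeasure μ]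
    (X : ℕ → Ω → ℝ × ℝ) (hXmeas : ∀ i, Measurable (X i))
    -- i.i.d. copies with standard exponential margins
    (hindep : iIndepFun X μ)
    (hident : ∀ i, Measure.map (X i) μ = Measure.map (X 0) μ)
    (hmarg1 : ∀ x : ℝ, 0 ≤ x → (μ {ω | x < (X 0 ω).1}).toReal = Real.exp (-x))
    (hmarg2 : ∀ x : ℝ, 0 ≤ x → (μ {ω | x < (X 0 ω).2}).toReal = Real.exp (-x))
    -- the gauge function g and its limit set G
    (g : ℝ × ℝ → ℝ) (hgcont : Continuous g)
    (hghomog : ∀ t : ℝ, 0 < t → ∀ p : ℝ × ℝ, g (t • p) = t * g p)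
    (hgmax : ∀ p : ℝ × ℝ, 0 ≤ p.1 → 0 ≤ p.2 → max p.1 p.2 ≤ g p)
    (G : Set (ℝ × ℝ)) (hG : G = {p : ℝ × ℝ | 0 ≤ p.1 ∧ 0 ≤ p.2 ∧ g p ≤ 1})
    (hconv : ConvInProbOnto2 μ (sampleCloud2 X fun n => Real.log n) G)
    -- the coefficients τ₁(δ), τ₂(δ), defined via Pareto margins X_P = exp X_E
    (δ : ℝ) (hδ0 : 0 ≤ δ) (hδ1 : δ ≤ 1)
    (τ₁ τ₂ : ℝ) (hτ₁0 : 0 < τ₁) (hτ₁1 : τ₁ ≤ 1) (hτ₂0 : 0 < τ₂) (hτ₂1 : τ₂ ≤ 1)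
    (hτ₁ : ∀ x y : ℝ, 0 < x → 0 < y → RegVaryingAtTop
      (fun t => (μ {a | x * t < Real.exp ((X 0 a).1) ∧
        Real.exp ((X 0 a).2) ≤ y * t ^ δ}).toReal) (-1 / τ₁))
    (hτ₂ : ∀ x y : ℝ, 0 < x → 0 < y → RegVaryingAtTop
      (fun t => (μ {a | x * t < Real.exp ((X 0 a).2) ∧
        Real.exp ((X 0 a).1) ≤ y * t ^ δ}).toReal) (-1 / τ₂)) :
    τ₁ = (sInf ((fun γ => g (1, γ)) '' Set.Icc 0 δ))⁻¹ ∧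
    τ₂ = (sInf ((fun γ => g (γ, 1)) '' Set.Icc 0 δ))⁻¹ := by
  have hpos2 : μ {ω | 0 < (X 0 ω).2} = 1 := by
    have h := hmarg2 0 le_rfl
    rw [neg_zero, Real.exp_zero] at h
    have h2 := ENNReal.ofReal_toReal (measure_ne_top μ {ω | 0 < (X 0 ω).2})
    rw [h] at h2
    rw [← h2]
    simp
  have hpos1 : μ {ω | 0 < (X 0 ω).1} = 1 := by
    have h := hmarg1 0 le_rfl
    rw [neg_zero, Real.exp_zero] at h
    have h2 := ENNReal.ofReal_toReal (measure_ne_top μ {ω | 0 < (X 0 ω).1})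
    rw [h] at h2
    rw [← h2]
    simp
  constructor
  · exact tau_first μ X hXmeas hindep hident hpos2 g hgcont hghomog hgmax G hG hconv
      δ hδ0 hδ1 τ₁ hτ₁0 hτ₁
  · -- swap coordinates
    set X' : ℕ → Ω → ℝ × ℝ := fun i ω => ((X i ω).2, (X i ω).1) with hX'
    have hX'meas : ∀ i, Measurable (X' i) := fun i =>
      (measurable_snd.comp (hXmeas i)).prodMk (measurable_fst.comp (hXmeas i))
    have hX'eq : ∀ i, X' i = Prod.swap ∘ X i := fun i => rfl
    have hindep' : iIndepFun X' μ :=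
      hindep.comp (fun _ => Prod.swap) (fun _ => measurable_swap)
    have hident' : ∀ i, Measure.map (X' i) μ = Measure.map (X' 0) μ := by
      intro i
      rw [hX'eq i, hX'eq 0, ← Measure.map_map measurable_swap (hXmeas i),
        ← Measure.map_map measurable_swap (hXmeas 0), hident i]
    have hpos2' : μ {ω | 0 < (X' 0 ω).2} = 1 := hpos1
    set g' : ℝ × ℝ → ℝ := fun p => g (p.2, p.1) with hg'
    have hg'cont : Continuous g' := hgcont.comp (continuous_snd.prodMk continuous_fst)
    have hg'homog : ∀ t : ℝ, 0 < t → ∀ p : ℝ × ℝ, g' (t • p) = t * g' p := by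
      intro t ht p
      show g (((t • p).2, (t • p).1) : ℝ×ℝ) = t * g ((p.2, p.1) : ℝ×ℝ)
      have hsw : (((t • p).2, (t • p).1) : ℝ×ℝ) = t • ((p.2, p.1) : ℝ×ℝ) := rfl
      rw [hsw, hghomog t ht]
    have hg'max : ∀ p : ℝ × ℝ, 0 ≤ p.1 → 0 ≤ p.2 → max p.1 p.2 ≤ g' p := by
      intro p h1 h2
      rw [max_comm]
      exact hgmax ((p.2, p.1) : ℝ×ℝ) h2 h1
    set G' : Set (ℝ × ℝ) := {p : ℝ × ℝ | 0 ≤ p.1 ∧ 0 ≤ p.2 ∧ g' p ≤ 1} with hG'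
    have hG'img : G' = Prod.swap '' G := by
      rw [hG', hG]
      ext p
      constructor
      · rintro ⟨h1, h2, h3⟩
        refine ⟨(p.2, p.1), ⟨h2, h1, h3⟩, ?_⟩
        simp
      · rintro ⟨q, ⟨h1, h2, h3⟩, rfl⟩
        refine ⟨h2, h1, ?_⟩
        show g ((Prod.swap q).2, (Prod.swap q).1) ≤ 1
        simpa using h3
    have hswapiso : Isometry (Prod.swap : ℝ×ℝ → ℝ×ℝ) := by
      apply Isometry.of_dist_eq
      intro a b
      rw [Prod.dist_eq, Prod.dist_eq]
      show max (dist a.2 b.2) (dist a.1 b.1) = max (dist a.1 b.1) (dist a.2 b.2)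
      rw [max_comm]
    have hcloud' : ∀ (n : ℕ) (ω : Ω), sampleCloud2 X' (fun n => Real.log n) n ω =
        Prod.swap '' sampleCloud2 X (fun n => Real.log n) n ω := by
      intro n ω
      ext y
      constructor
      · rintro ⟨i, h1, h2, rfl⟩
        exact ⟨(Real.log n)⁻¹ • X i ω, ⟨i, h1, h2, rfl⟩, rfl⟩
      · rintro ⟨z, ⟨i, h1, h2, rfl⟩, rfl⟩
        exact ⟨i, h1, h2, rfl⟩
    have hconv' : ConvInProbOnto2 μ (sampleCloud2 X' fun n => Real.log n) G' := by
      intro ε hε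
      have heqset : ∀ n : ℕ,
          {ω | ε < Metric.hausdorffDist (sampleCloud2 X' (fun m => Real.log m) n ω) G'}
          = {ω | ε < Metric.hausdorffDist (sampleCloud2 X (fun m => Real.log m) n ω) G} := by
        intro n
        ext ω
        rw [Set.mem_setOf_eq, Set.mem_setOf_eq, hcloud' n ω, hG'img,
          Metric.hausdorffDist_image hswapiso]
      have := hconv ε hε
      refine this.congr ?_
      intro n
      rw [heqset n]
    have hτ' : ∀ x y : ℝ, 0 < x → 0 < y → RegVaryingAtTop
        (fun t => (μ {a | x * t < Real.exp ((X' 0 a).1) ∧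
          Real.exp ((X' 0 a).2) ≤ y * t ^ δ}).toReal) (-1 / τ₂) := hτ₂
    have hres := tau_first μ X' hX'meas hindep' hident' hpos2' g' hg'cont hg'homog hg'max
      G' hG' hconv' δ hδ0 hδ1 τ₂ hτ₂0 hτ'
    have hfun : (fun γ : ℝ => g' (1, γ)) = (fun γ : ℝ => g (γ, 1)) := rfl
    rw [hfun] at hres
    exact hres
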